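/- arXiv:2511.13484 — 4 statements merged into one kernel-verified Lean document; each statement's English description precedes it below -/
import Mathlib

section
/- For z, w in the open unit disk with z ≠ w, the point c = (|zw|^2 - 1 + sqrt((1-|z|^2)(1-|w|^2)|1 - conj(w) z|^2)) / (conj(zw)(z+w) - (conj(z)+conj(w))) (when the denominator is nonzero) satisfies the pseudo-hyperbolic distance equality |(c-z)/(1-conj(z)c)| = |(c-w)/(1-conj(w)c)|, i.e. c is hyperbolically equidistant from z and w. -/
open Complex ComplexConjugate

lemma normc (x : ℂ) : ((‖x‖^2 : ℝ) : ℂ) = x * conj x := by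
  rw [Complex.mul_conj]; norm_cast
  rw [Complex.normSq_eq_norm_sq]

lemma one_sub_ne {a b : ℂ} (h : ‖a‖ * ‖b‖ < 1) : (1 : ℂ) - a * b ≠ 0 := by
  intro hh
  have h1 : a * b = 1 := by linear_combination -hh
  have := congrArg norm h1
  rw [norm_mul, norm_one] at this
  exact absurd this (ne_of_lt h)

lemma norm_flip (z w : ℂ) : ‖1 - conj z * w‖ = ‖1 - conj w * z‖ := by
  rw [← RCLike.norm_conj (1 - conj w * z)]
  simp only [map_sub, map_mul, map_one, Complex.conj_conj]
  ring_nf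

lemma key_poly (z u w v S N D Db : ℂ)
    (hN : N = z*u*w*v - 1 + S)
    (hD : D = u*v*(z+w) - (u+v))
    (hDb : Db = z*w*(u+v) - (z+w))
    (hS : S^2 = (1-z*u)*(1-w*v)*(1-v*z)*(1-u*w)) :
    (N - z*D)*(N - u*Db)*((D - v*N)*(Db - w*N)) =
    (N - w*D)*(N - v*Db)*((D - u*N)*(Db - z*N)) := by
  subst hN hD hDb
  linear_combination (w*v - 2*w*v*S + w*v*S^2 - w^2*v^2 - u*w^2*v + u*w^3*v^2 - z*w*v^2 + z*w^2*v^3 - z*u + 2*z*u*S - z*u*S^2 + 2*z*u*w^2*v^2 + 2*z*u*w^2*v^2*S - z*u*w^3*v^3 + z*u^2*w - z*u^2*w^3*v^2 + z^2*u*v - z^2*u*w^2*v^3 + z^2*u^2 - 2*z^2*u^2*w*v - 2*z^2*u^2*w*v*S + z^2*u^2*w^3*v^3 - z^2*u^3*w + z^2*u^3*w^2*v - z^3*u^2*v + z^3*u^2*w*v^2 + z^3*u^3*w*v - z^3*u^3*w^2*v^2) * hS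

lemma sqrt_coe_sq (z w : ℂ) (hz : ‖z‖ < 1) (hw : ‖w‖ < 1) :
    ((Real.sqrt ((1 - ‖z‖ ^ 2) * (1 - ‖w‖ ^ 2) * ‖1 - conj w * z‖ ^ 2) : ℝ) : ℂ)^2 =
    (1 - z * conj z) * (1 - w * conj w) * ((1 - conj w * z) * (1 - conj z * w)) := by
  have hp : ‖z‖^2 < 1 := by nlinarith [norm_nonneg z]
  have hq : ‖w‖^2 < 1 := by nlinarith [norm_nonneg w]
  have hR0 : 0 ≤ (1 - ‖z‖ ^ 2) * (1 - ‖w‖ ^ 2) * ‖1 - conj w * z‖ ^ 2 :=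
    mul_nonneg (mul_nonneg (by linarith) (by linarith)) (sq_nonneg _)
  have hS2r : Real.sqrt ((1 - ‖z‖ ^ 2) * (1 - ‖w‖ ^ 2) * ‖1 - conj w * z‖ ^ 2) ^ 2
      = (1 - ‖z‖ ^ 2) * (1 - ‖w‖ ^ 2) * ‖1 - conj w * z‖ ^ 2 := Real.sq_sqrt hR0
  have e1 := normc z
  have e2 := normc w
  have e3 := normc (1 - conj w * z)
  have e4 : conj (1 - conj w * z) = 1 - conj z * w := by
    simp only [map_sub, map_mul, map_one, Complex.conj_conj]; ring
  rw [e4] at e3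
  calc ((Real.sqrt ((1 - ‖z‖ ^ 2) * (1 - ‖w‖ ^ 2) * ‖1 - conj w * z‖ ^ 2) : ℝ) : ℂ)^2
      = ((Real.sqrt ((1 - ‖z‖ ^ 2) * (1 - ‖w‖ ^ 2) * ‖1 - conj w * z‖ ^ 2) ^ 2 : ℝ) : ℂ) := by
        push_cast; ring
    _ = (((1 - ‖z‖ ^ 2) * (1 - ‖w‖ ^ 2) * ‖1 - conj w * z‖ ^ 2 : ℝ) : ℂ) := by rw [hS2r]
    _ = (1 - z * conj z) * (1 - w * conj w) * ((1 - conj w * z) * (1 - conj z * w)) := by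
        push_cast
        push_cast at e1 e2 e3
        rw [e1, e2, e3]

lemma aux_ne (z w c : ℂ) (hz : ‖z‖ < 1) (hw : ‖w‖ < 1)
    (hden : conj (z * w) * (z + w) - (conj z + conj w) ≠ 0)
    (hc : c * (conj (z * w) * (z + w) - (conj z + conj w)) =
      ((‖z * w‖ ^ 2 - 1 : ℝ) : ℂ) +
      ((Real.sqrt ((1 - ‖z‖ ^ 2) * (1 - ‖w‖ ^ 2) * ‖1 - conj w * z‖ ^ 2) : ℝ) : ℂ)) :
    1 - conj z * c ≠ 0 := by
  intro h
  have hz0 : z ≠ 0 := by rintro rfl; simp at h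
  have hS2 := sqrt_coe_sq z w hz hw
  set S : ℝ := Real.sqrt ((1 - ‖z‖ ^ 2) * (1 - ‖w‖ ^ 2) * ‖1 - conj w * z‖ ^ 2) with hSdef
  have hp : ‖z‖^2 < 1 := by nlinarith [norm_nonneg z]
  have hq : ‖w‖^2 < 1 := by nlinarith [norm_nonneg w]
  have e1 := normc z
  have e2 := normc w
  have e0 := normc (z * w)
  have hNc : c * (conj z * conj w * (z + w) - (conj z + conj w)) =
      z * conj z * w * conj w - 1 + (S : ℂ) := by
    push_cast at hc
    rw [map_mul] at hc e0
    push_cast at e0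
    linear_combination hc + e0
  have hcu : conj z * c = 1 := by linear_combination -h
  have h1 : conj z * (z * conj z * w * conj w - 1 + (S : ℂ)) =
      conj z * conj w * (z + w) - (conj z + conj w) := by
    linear_combination (-(conj z)) * hNc + (conj z * conj w * (z + w) - (conj z + conj w)) * hcu
  have h2 := congrArg (starRingEnd ℂ) h1
  simp only [map_mul, map_add, map_sub, map_one, Complex.conj_conj, Complex.conj_ofReal] at h2
  have E1 : conj w * (1 - conj z * z) * (1 - conj z * w) = -(conj z * (S:ℂ)) := by
    linear_combination h1
  have E2 : w * (1 - z * conj z) * (1 - z * conj w) = -(z * (S:ℂ)) := by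
    linear_combination h2
  have hA : (1:ℂ) - conj z * z ≠ 0 :=
    one_sub_ne (by rw [RCLike.norm_conj]; nlinarith [norm_nonneg z])
  have hB : (1:ℂ) - conj z * w ≠ 0 :=
    one_sub_ne (by rw [RCLike.norm_conj]; nlinarith [norm_nonneg z, norm_nonneg w])
  have hC : (1:ℂ) - z * conj w ≠ 0 :=
    one_sub_ne (by rw [RCLike.norm_conj]; nlinarith [norm_nonneg z, norm_nonneg w])
  have hC' : (1:ℂ) - conj w * z ≠ 0 := by rw [mul_comm]; exact hC
  have h3 : (conj w * w * (1 - conj z * z) - z * conj z * (1 - w * conj w)) *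
      ((1 - conj z * z) * ((1 - conj z * w) * (1 - z * conj w))) = 0 := by
    linear_combination (w * (1 - z * conj z) * (1 - z * conj w)) * E1
      - (conj z * (S:ℂ)) * E2 + (z * conj z) * hS2
  have h4 : conj w * w * (1 - conj z * z) = z * conj z * (1 - w * conj w) := by
    rcases mul_eq_zero.mp h3 with h4 | h4
    · linear_combination h4
    · exact absurd h4 (mul_ne_zero hA (mul_ne_zero hB hC))
  have h5 : ((‖w‖^2 - ‖z‖^2 : ℝ) : ℂ) = 0 := by
    push_cast
    push_cast at e1 e2
    linear_combination h4 + e2 - e1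
  have h6 : ‖w‖^2 = ‖z‖^2 := by
    have := Complex.ofReal_eq_zero.mp h5; linarith
  have hlam0 : 0 < ‖1 - conj w * z‖ := norm_pos_iff.mpr hC'
  have hSval : S = (1 - ‖z‖^2) * ‖1 - conj w * z‖ := by
    rw [hSdef, h6, show (1 - ‖z‖ ^ 2) * (1 - ‖z‖ ^ 2) * ‖1 - conj w * z‖ ^ 2
        = ((1 - ‖z‖ ^ 2) * ‖1 - conj w * z‖)^2 by ring]
    exact Real.sqrt_sq (mul_nonneg (by linarith) (norm_nonneg _))
  have hSc : ((S:ℝ):ℂ) = (1 - ((‖z‖^2 : ℝ):ℂ)) * ((‖1 - conj w * z‖ : ℝ):ℂ) := by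
    rw [hSval]; push_cast; ring
  have hp1 : (1 : ℂ) - ((‖z‖^2 : ℝ):ℂ) ≠ 0 := by
    intro hh
    have h9 : ((‖z‖^2 : ℝ) : ℂ) = ((1:ℝ):ℂ) := by push_cast at hh ⊢; linear_combination -hh
    have := Complex.ofReal_inj.mp h9
    linarith
  have E4 : w * (1 - z * conj w) = -(z * ((‖1 - conj w * z‖ : ℝ):ℂ)) := by
    apply mul_left_cancel₀ hp1
    linear_combination E2 - (w * (1 - z * conj w)) * e1 - z * hSc
  have h6c : ((‖w‖^2 : ℝ):ℂ) = ((‖z‖^2 : ℝ):ℂ) := by norm_cast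
  have E5 : w = z * (((‖z‖^2 - ‖1 - conj w * z‖ : ℝ)) : ℂ) := by
    push_cast
    push_cast at E4 e2 h6c
    linear_combination E4 - z * e2 + z * h6c
  have hnwz : ‖w‖ = ‖z‖ := by
    rw [← Real.sqrt_sq (norm_nonneg w), h6, Real.sqrt_sq (norm_nonneg z)]
  have hnw : ‖w‖ = ‖z‖ * |‖z‖^2 - ‖1 - conj w * z‖| := by
    have h8 := congrArg norm E5
    rw [norm_mul, Complex.norm_real, Real.norm_eq_abs] at h8
    exact h8
  have hzpos : 0 < ‖z‖ := norm_pos_iff.mpr hz0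
  have habs : |‖z‖^2 - ‖1 - conj w * z‖| = 1 := by
    have h7 : ‖z‖ * |‖z‖^2 - ‖1 - conj w * z‖| = ‖z‖ * 1 :=
      (hnw.symm.trans hnwz).trans (mul_one ‖z‖).symm
    exact mul_left_cancel₀ (ne_of_gt hzpos) h7
  rcases abs_eq (by norm_num : (0:ℝ) ≤ 1) |>.mp habs with hcase | hcase
  · linarith [hlam0, hp]
  · have hw' : w = -z := by
      rw [E5, show (‖z‖^2 - ‖1 - conj w * z‖ : ℝ) = -1 by linarith]
      push_cast; ring
    apply hden
    rw [hw']
    simp only [map_neg, map_mul]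
    ring

theorem hyperbolic_midpoint_equidistant (z w : ℂ) (hz : ‖z‖ < 1) (hw : ‖w‖ < 1)
    (hzw : z ≠ w)
    (hden : (starRingEnd ℂ) (z * w) * (z + w) - ((starRingEnd ℂ) z + (starRingEnd ℂ) w) ≠ 0) :
    let c : ℂ := ((‖z * w‖ ^ 2 - 1 : ℝ) +
      (Real.sqrt ((1 - ‖z‖ ^ 2) * (1 - ‖w‖ ^ 2) * ‖1 - (starRingEnd ℂ) w * z‖ ^ 2) : ℝ)) /
      ((starRingEnd ℂ) (z * w) * (z + w) - ((starRingEnd ℂ) z + (starRingEnd ℂ) w))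
    ‖(c - z) / (1 - (starRingEnd ℂ) z * c)‖ = ‖(c - w) / (1 - (starRingEnd ℂ) w * c)‖ := by
  intro c
  have hcD : c * (conj (z * w) * (z + w) - (conj z + conj w)) =
      ((‖z * w‖ ^ 2 - 1 : ℝ) : ℂ) +
      ((Real.sqrt ((1 - ‖z‖ ^ 2) * (1 - ‖w‖ ^ 2) * ‖1 - conj w * z‖ ^ 2) : ℝ) : ℂ) := by
    show (_ / _) * _ = _
    rw [div_mul_cancel₀ _ hden]
  have hB1 : 1 - conj z * c ≠ 0 := aux_ne z w c hz hw hden hcD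
  have hden' : conj (w * z) * (w + z) - (conj w + conj z) ≠ 0 := by
    rw [mul_comm w z, add_comm w z, add_comm (conj w) (conj z)]; exact hden
  have hc' : c * (conj (w * z) * (w + z) - (conj w + conj z)) =
      ((‖w * z‖ ^ 2 - 1 : ℝ) : ℂ) +
      ((Real.sqrt ((1 - ‖w‖ ^ 2) * (1 - ‖z‖ ^ 2) * ‖1 - conj z * w‖ ^ 2) : ℝ) : ℂ) := by
    rw [mul_comm w z, add_comm w z, add_comm (conj w) (conj z),
      show (1 - ‖w‖ ^ 2) * (1 - ‖z‖ ^ 2) * ‖1 - conj z * w‖ ^ 2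
        = (1 - ‖z‖ ^ 2) * (1 - ‖w‖ ^ 2) * ‖1 - conj w * z‖ ^ 2 by rw [norm_flip]; ring]
    exact hcD
  have hB2 : 1 - conj w * c ≠ 0 := aux_ne w z c hw hz hden' hc'
  -- algebraic setup
  have hS2 := sqrt_coe_sq z w hz hw
  set S : ℝ := Real.sqrt ((1 - ‖z‖ ^ 2) * (1 - ‖w‖ ^ 2) * ‖1 - conj w * z‖ ^ 2) with hSdef
  have e0 := normc (z * w)
  have hNc : c * (conj z * conj w * (z + w) - (conj z + conj w)) =
      z * conj z * w * conj w - 1 + (S : ℂ) := by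
    push_cast at hcD
    rw [map_mul] at hcD e0
    push_cast at e0
    linear_combination hcD + e0
  have hD2 : conj z * conj w * (z + w) - (conj z + conj w) ≠ 0 := by
    intro hh
    apply hden
    rw [map_mul]
    exact hh
  have hcb := congrArg (starRingEnd ℂ) hNc
  simp only [map_mul, map_add, map_sub, map_one, Complex.conj_conj, Complex.conj_ofReal] at hcb
  have hDb2 : z * w * (conj z + conj w) - (z + w) ≠ 0 := by
    intro hh
    apply hD2
    have h0 := congrArg (starRingEnd ℂ) hh
    simp only [map_mul, map_add, map_sub, map_zero, Complex.conj_conj] at h0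
    linear_combination h0
  have hkey := key_poly z (conj z) w (conj w) ((S:ℝ):ℂ)
    (z * conj z * w * conj w - 1 + (S : ℂ))
    (conj z * conj w * (z + w) - (conj z + conj w))
    (z * w * (conj z + conj w) - (z + w))
    rfl rfl rfl (by linear_combination hS2)
  have h1 : c = (z * conj z * w * conj w - 1 + (S : ℂ)) /
      (conj z * conj w * (z + w) - (conj z + conj w)) := (eq_div_iff hD2).mpr hNc
  have h2 : conj c = (z * conj z * w * conj w - 1 + (S : ℂ)) /
      (z * w * (conj z + conj w) - (z + w)) := by
    apply (eq_div_iff hDb2).mpr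
    linear_combination hcb
  have H : (c - z) * (conj c - conj z) * ((1 - conj w * c) * (1 - w * conj c)) =
      (c - w) * (conj c - conj w) * ((1 - conj z * c) * (1 - z * conj c)) := by
    rw [h2, h1]
    field_simp
    linear_combination hkey
  have hns : ((Complex.normSq (c - z) * Complex.normSq (1 - conj w * c) : ℝ) : ℂ) =
      ((Complex.normSq (c - w) * Complex.normSq (1 - conj z * c) : ℝ) : ℂ) := by
    push_cast
    simp only [← Complex.mul_conj]
    simp only [map_sub, map_mul, map_one, Complex.conj_conj]
    linear_combination H
  have hns' : Complex.normSq (c - z) * Complex.normSq (1 - conj w * c) =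
      Complex.normSq (c - w) * Complex.normSq (1 - conj z * c) := by
    exact_mod_cast hns
  rw [norm_div, norm_div, div_eq_div_iff (norm_ne_zero_iff.mpr hB1) (norm_ne_zero_iff.mpr hB2)]
  have hsq : (‖c - z‖ * ‖1 - conj w * c‖)^2 = (‖c - w‖ * ‖1 - conj z * c‖)^2 := by
    rw [mul_pow, mul_pow]
    simp only [Complex.sq_norm]
    exact hns'
  rw [← Real.sqrt_sq (by positivity : (0:ℝ) ≤ ‖c - z‖ * ‖1 - conj w * c‖), hsq,
    Real.sqrt_sq (by positivity)]
end

section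
/- Let s ∈ [0,1). The only solution w in the closed unit disk of the equation s^2 w^3 + 3 conj(w) w^2 + 3 w + s^2 conj(w) = 0 with |w| < 1 is w = 0. Moreover, any nonzero solution satisfies |w| = 1. -/
open Complex

theorem inflection_equation_only_zero (s : ℝ) (hs0 : 0 ≤ s) (hs1 : s < 1) (w : ℂ)
    (hw : (s : ℂ) ^ 2 * w ^ 3 + 3 * (starRingEnd ℂ) w * w ^ 2 + 3 * w +
      (s : ℂ) ^ 2 * (starRingEnd ℂ) w = 0) :
    (‖w‖ < 1 → w = 0) ∧ (w ≠ 0 → ‖w‖ = 1) := by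
  set x := w.re with hx
  set y := w.im with hy
  have hre := congrArg Complex.re hw
  have him := congrArg Complex.im hw
  simp [Complex.ext_iff, Complex.mul_re, Complex.mul_im, pow_succ, pow_zero] at hre him
  have h1 : x * (s^2*x^2 - 3*s^2*y^2 + 3*x^2 + 3*y^2 + 3 + s^2) = 0 := by
    ring_nf at hre ⊢; linarith
  have h2 : y * (3*s^2*x^2 - s^2*y^2 + 3*x^2 + 3*y^2 + 3 - s^2) = 0 := by
    ring_nf at him ⊢; linarith
  have hss1 : s^2 < 1 := by nlinarith
  have key : w ≠ 0 → ‖w‖ = 1 := by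
    intro hw0
    have hxy : x ≠ 0 ∨ y ≠ 0 := by
      by_contra h
      push_neg at h
      exact hw0 (Complex.ext h.1 h.2)
    have hsum : x^2 + y^2 = 1 := by
      by_cases hy0 : y = 0
      · exfalso
        rcases hxy with hx0 | hy0'
        · have hf : s^2*x^2 - 3*s^2*y^2 + 3*x^2 + 3*y^2 + 3 + s^2 = 0 :=
            (mul_eq_zero.mp h1).resolve_left hx0
          have hy2 : y^2 = 0 := by rw [hy0]; ring
          nlinarith [sq_nonneg x, sq_nonneg s, sq_nonneg (s*x)]
        · exact hy0' hy0
      · have hf2 : 3*s^2*x^2 - s^2*y^2 + 3*x^2 + 3*y^2 + 3 - s^2 = 0 :=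
          (mul_eq_zero.mp h2).resolve_left hy0
        by_cases hx0 : x = 0
        · exfalso
          have hx2 : x^2 = 0 := by rw [hx0]; ring
          nlinarith [mul_nonneg (by nlinarith : (0:ℝ) ≤ 3 - s^2) (sq_nonneg y),
            sq_nonneg (s*y), sq_nonneg y]
        · have hf1 : s^2*x^2 - 3*s^2*y^2 + 3*x^2 + 3*y^2 + 3 + s^2 = 0 :=
            (mul_eq_zero.mp h1).resolve_left hx0
          have hs : s ≠ 0 := by
            intro h0
            rw [h0] at hf1
            nlinarith [sq_nonneg x, sq_nonneg y]
          have hss : s^2 > 0 := by positivity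
          have hz : s^2 * (x^2 + y^2 - 1) = 0 := by nlinarith
          rcases mul_eq_zero.mp hz with h | h
          · linarith
          · linarith
    have hn2 : ‖w‖^2 = 1 := by
      rw [Complex.sq_norm, Complex.normSq_apply]
      nlinarith [hsum]
    have hfac : (‖w‖ - 1) * (‖w‖ + 1) = 0 := by nlinarith
    rcases mul_eq_zero.mp hfac with h | h
    · linarith
    · nlinarith [norm_nonneg w]
  refine ⟨fun hlt => ?_, key⟩
  by_contra h
  have := key h
  linarith
end

section
/- Let r, s ∈ ℂ and define q(z) = (1+s) z^3 + 2(conj(sr) - sr) z^2 - 3 conj(1+s) z + 4r. Then the iterated Schur transforms satisfy: δ_1 := Tq(0) = 16|r|^2 - |1+s|^2, δ_2 := T^2 q(0) = (16|r|^2 - |1+s|^2)^2 - |3(1+s)^2 + 8 conj(r)(conj(sr) - sr)|^2, and δ_3 := T^3 q(0) = δ_2^2 - |(|1+s|^2 - 16|r|^2)(2(1+s)(sr - conj(sr)) + 12 conj(r) conj(1+s)) + (3(1+s)^2 + 8 conj(r)(conj(sr) - sr))(2 conj(1+s)(conj(sr) - sr) + 12 r(1+s))|^2. -/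
open Complex Polynomial

/-- The reciprocal polynomial of a polynomial viewed as having degree `d`:
coefficients reversed and conjugated. -/
noncomputable def recipPoly (d : ℕ) (p : Polynomial ℂ) : Polynomial ℂ :=
  ∑ k ∈ Finset.range (d + 1), Polynomial.C ((starRingEnd ℂ) (p.coeff (d - k))) * Polynomial.X ^ k

/-- The Schur transform `Tp(z) = conj(p(0)) p(z) - conj(p*(0)) p*(z)`. -/
noncomputable def schurT (d : ℕ) (p : Polynomial ℂ) : Polynomial ℂ :=
  Polynomial.C ((starRingEnd ℂ) (p.eval 0)) * p -
    Polynomial.C ((starRingEnd ℂ) ((recipPoly d p).eval 0)) * recipPoly d p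

set_option maxHeartbeats 1600000 in
lemma recipPoly_eval0 (d : ℕ) (p : Polynomial ℂ) :
    (recipPoly d p).eval 0 = (starRingEnd ℂ) (p.coeff d) := by
  simp only [recipPoly, Polynomial.eval_finset_sum, Polynomial.eval_mul, Polynomial.eval_pow,
    Polynomial.eval_C, Polynomial.eval_X]
  rw [Finset.sum_eq_single 0]
  · simp
  · intro b _ hb; simp [zero_pow hb]
  · simp

lemma recipPoly_coeff (d k : ℕ) (hk : k ≤ d) (p : Polynomial ℂ) :
    (recipPoly d p).coeff k = (starRingEnd ℂ) (p.coeff (d - k)) := by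
  simp only [recipPoly, Polynomial.finset_sum_coeff, Polynomial.coeff_C_mul,
    Polynomial.coeff_X_pow]
  rw [Finset.sum_eq_single k]
  · simp
  · intro b _ hb; simp [hb.symm]
  · intro h; exact absurd (Finset.mem_range.2 (Nat.lt_succ_of_le hk)) h

lemma schurT_eval0 (d : ℕ) (p : Polynomial ℂ) :
    (schurT d p).eval 0 = (starRingEnd ℂ) (p.coeff 0) * p.coeff 0
      - p.coeff d * (starRingEnd ℂ) (p.coeff d) := by
  simp [schurT, recipPoly_eval0, ← Polynomial.coeff_zero_eq_eval_zero,
    recipPoly_coeff d 0 (Nat.zero_le d), mul_comm]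

lemma schurT_coeff (d k : ℕ) (hk : k ≤ d) (p : Polynomial ℂ) :
    (schurT d p).coeff k = (starRingEnd ℂ) (p.coeff 0) * p.coeff k
      - p.coeff d * (starRingEnd ℂ) (p.coeff (d - k)) := by
  simp [schurT, recipPoly_eval0, ← Polynomial.coeff_zero_eq_eval_zero,
    recipPoly_coeff d k hk, recipPoly_coeff d 0 (Nat.zero_le d), mul_comm]

lemma normc2 (z : ℂ) : ((‖z‖ : ℝ) : ℂ) ^ 2 = z * (starRingEnd ℂ) z := by
  rw [Complex.mul_conj]
  norm_cast
  rw [Complex.sq_norm]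

theorem schur_cohn_deltas_degree_three (r s : ℂ) :
    let q : Polynomial ℂ := C (1 + s) * X ^ 3 +
      C (2 * ((starRingEnd ℂ) (s * r) - s * r)) * X ^ 2 -
      C (3 * (starRingEnd ℂ) (1 + s)) * X + C (4 * r)
    (schurT 3 q).eval 0 = ((16 * ‖r‖ ^ 2 - ‖1 + s‖ ^ 2 : ℝ) : ℂ) ∧
    (schurT 2 (schurT 3 q)).eval 0 =
      (((16 * ‖r‖ ^ 2 - ‖1 + s‖ ^ 2) ^ 2 -
        ‖3 * (1 + s) ^ 2 + 8 * (starRingEnd ℂ) r * ((starRingEnd ℂ) (s * r) - s * r)‖ ^ 2 : ℝ) : ℂ) ∧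
    (schurT 1 (schurT 2 (schurT 3 q))).eval 0 =
      ((((16 * ‖r‖ ^ 2 - ‖1 + s‖ ^ 2) ^ 2 -
        ‖3 * (1 + s) ^ 2 + 8 * (starRingEnd ℂ) r * ((starRingEnd ℂ) (s * r) - s * r)‖ ^ 2) ^ 2 -
        ‖(((‖1 + s‖ ^ 2 - 16 * ‖r‖ ^ 2 : ℝ) : ℂ)) *
            (2 * (1 + s) * (s * r - (starRingEnd ℂ) (s * r)) +
              12 * (starRingEnd ℂ) r * (starRingEnd ℂ) (1 + s)) +
          (3 * (1 + s) ^ 2 + 8 * (starRingEnd ℂ) r * ((starRingEnd ℂ) (s * r) - s * r)) *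
            (2 * (starRingEnd ℂ) (1 + s) * ((starRingEnd ℂ) (s * r) - s * r) +
              12 * r * (1 + s))‖ ^ 2 : ℝ) : ℂ) := by
  intro q
  have hq : q = C (1 + s) * X ^ 3 +
      C (2 * ((starRingEnd ℂ) (s * r) - s * r)) * X ^ 2 -
      C (3 * (starRingEnd ℂ) (1 + s)) * X + C (4 * r) := rfl
  have h0 : q.coeff 0 = 4 * r := by
    rw [hq]
    simp only [Polynomial.coeff_add, Polynomial.coeff_sub, Polynomial.coeff_C_mul,
      Polynomial.coeff_X_pow, Polynomial.coeff_X, Polynomial.coeff_C]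
    norm_num
  have h1 : q.coeff 1 = -(3 * (starRingEnd ℂ) (1 + s)) := by
    rw [hq]
    simp only [Polynomial.coeff_add, Polynomial.coeff_sub, Polynomial.coeff_C_mul,
      Polynomial.coeff_X_pow, Polynomial.coeff_X, Polynomial.coeff_C]
    norm_num
  have h2 : q.coeff 2 = 2 * ((starRingEnd ℂ) (s * r) - s * r) := by
    rw [hq]
    simp only [Polynomial.coeff_add, Polynomial.coeff_sub, Polynomial.coeff_C_mul,
      Polynomial.coeff_X_pow, Polynomial.coeff_X, Polynomial.coeff_C]
    norm_num
  have h3 : q.coeff 3 = 1 + s := by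
    rw [hq]
    simp only [Polynomial.coeff_add, Polynomial.coeff_sub, Polynomial.coeff_C_mul,
      Polynomial.coeff_X_pow, Polynomial.coeff_X, Polynomial.coeff_C]
    norm_num
  have b0 := schurT_coeff 3 0 (by norm_num) q
  have b1 := schurT_coeff 3 1 (by norm_num) q
  have b2 := schurT_coeff 3 2 (by norm_num) q
  norm_num [h0, h1, h2, h3, map_mul, map_add, map_sub, map_neg, map_one, map_pow, map_ofNat, Complex.conj_conj] at b0 b1 b2
  have c0 := schurT_coeff 2 0 (by norm_num) (schurT 3 q)
  have c1 := schurT_coeff 2 1 (by norm_num) (schurT 3 q)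
  norm_num [b0, b1, b2, map_mul, map_add, map_sub, map_neg, map_one, map_pow, map_ofNat, Complex.conj_conj] at c0 c1

  refine ⟨?_, ?_, ?_⟩
  · rw [schurT_eval0, h0, h3]
    push_cast
    simp only [normc2, map_mul, map_add, map_sub, map_neg, map_one, map_pow, map_ofNat, Complex.conj_conj]
    ring
  · rw [schurT_eval0, b0, b2]
    push_cast
    simp only [normc2, map_mul, map_add, map_sub, map_neg, map_one, map_pow, map_ofNat, Complex.conj_conj]
    ring
  · rw [schurT_eval0, c0, c1]
    push_cast
    simp only [normc2, map_mul, map_add, map_sub, map_neg, map_one, map_pow, map_ofNat, Complex.conj_conj]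
    ring
end

section
/- Let p be a complex polynomial of degree d ≥ 1 all of whose roots lie on the unit circle and are simple. Then all roots of p' lie in the open unit disk 𝔻. -/
open Polynomial

lemma key_re_pos (z r : ℂ) (hz : 1 ≤ ‖z‖) (hr : ‖r‖ = 1) (hne : z ≠ r) :
    0 < (z * (z - r)⁻¹).re := by
  have hzr : z - r ≠ 0 := sub_ne_zero.mpr hne
  have h1 : 0 < Complex.normSq (z - r) := Complex.normSq_pos.mpr hzr
  have hz2 : 1 ≤ Complex.normSq z := by
    have h := Complex.sq_norm z
    nlinarith
  have hr2 : Complex.normSq r = 1 := by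
    have h := Complex.sq_norm r
    nlinarith
  rw [mul_comm, inv_mul_eq_div, Complex.div_re]
  have hnum : 0 < z.re * (z - r).re + z.im * (z - r).im := by
    have e1 : Complex.normSq (z - r) = (z.re - r.re) ^ 2 + (z.im - r.im) ^ 2 := by
      simp [Complex.normSq_apply, Complex.sub_re, Complex.sub_im]; ring
    have e2 : Complex.normSq z = z.re ^ 2 + z.im ^ 2 := by
      simp [Complex.normSq_apply]; ring
    have e3 : Complex.normSq r = r.re ^ 2 + r.im ^ 2 := by
      simp [Complex.normSq_apply]; ring
    simp only [Complex.sub_re, Complex.sub_im]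
    nlinarith
  rw [← add_div]
  exact div_pos hnum h1

theorem deriv_roots_in_disk (p : Polynomial ℂ) (hd : 1 ≤ p.natDegree)
    (hroots : ∀ z : ℂ, p.IsRoot z → ‖z‖ = 1 ∧ p.rootMultiplicity z = 1) :
    ∀ z : ℂ, (Polynomial.derivative p).IsRoot z → ‖z‖ < 1 := by
  classical
  intro z hz
  by_contra hlt
  push_neg at hlt
  have hp0 : p ≠ 0 := fun h => by simp [h] at hd
  have hderiv0 : derivative p ≠ 0 := by
    intro h
    have := natDegree_eq_zero_of_derivative_eq_zero h
    omega
  -- z is not a root of p (simple roots)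
  have hznr : ¬ p.IsRoot z := by
    intro h
    have h1 := (hroots z h).2
    have h2 := derivative_rootMultiplicity_of_root (p := p) h
    rw [h1] at h2
    have h3 := (rootMultiplicity_pos hderiv0).mpr hz
    omega
  set S := p.roots with hSdef
  have hsplit : p.Splits := IsAlgClosed.splits p
  have hcard : S.card = p.natDegree := (splits_iff_card_roots).mp hsplit
  have hfac : p = C p.leadingCoeff * (S.map fun a => X - C a).prod :=
    hsplit.eq_prod_roots
  have hmemroot : ∀ r ∈ S, p.IsRoot r := fun r hr => isRoot_of_mem_roots hr
  have hzne : ∀ r ∈ S, z ≠ r := fun r hr h => hznr (h ▸ hmemroot r hr)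
  -- evaluate the derivative
  have hderiv : derivative p
      = C p.leadingCoeff *
        (S.map fun r => ((S.erase r).map fun a => X - C a).prod * derivative (X - C r)).sum := by
    conv_lhs => rw [hfac]
    rw [derivative_C_mul, derivative_prod]
  have heval : eval z (derivative p)
      = p.leadingCoeff * (S.map fun r => ((S.erase r).map fun a => z - a).prod).sum := by
    rw [hderiv]
    simp only [derivative_sub, derivative_X, derivative_C, sub_zero, mul_one]
    rw [eval_mul, eval_C]
    rw [← coe_evalRingHom, map_multiset_sum, Multiset.map_map]
    congr 1
    apply congrArg Multiset.sum
    apply Multiset.map_congr rfl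
    intro r _
    simp only [Function.comp_apply, coe_evalRingHom]
    rw [eval_multiset_prod]
    rw [Multiset.map_map]
    apply congrArg
    apply Multiset.map_congr rfl
    intro a _
    simp
  set Q : ℂ := (S.map fun a => z - a).prod with hQdef
  have hQne : Q ≠ 0 := by
    rw [hQdef]
    intro h
    have h0 := Multiset.prod_eq_zero_iff.mp h
    rcases Multiset.mem_map.mp h0 with ⟨r, hr, hre⟩
    exact hzne r hr (sub_eq_zero.mp hre)
  have hterm : ∀ r ∈ S, ((S.erase r).map fun a => z - a).prod = Q * (z - r)⁻¹ := by
    intro r hr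
    have hzr : z - r ≠ 0 := sub_ne_zero.mpr (hzne r hr)
    have : Q = (z - r) * ((S.erase r).map fun a => z - a).prod := by
      rw [hQdef]
      conv_lhs => rw [← Multiset.cons_erase hr]
      rw [Multiset.map_cons, Multiset.prod_cons]
    rw [this, mul_comm (z - r), mul_inv_cancel_right₀ hzr]
  have heval2 : eval z (derivative p)
      = p.leadingCoeff * (Q * (S.map fun r => (z - r)⁻¹).sum) := by
    rw [heval, Multiset.map_congr rfl hterm, Multiset.sum_map_mul_left]
  have hlc : p.leadingCoeff ≠ 0 := leadingCoeff_ne_zero.mpr hp0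
  have hsum0 : (S.map fun r => (z - r)⁻¹).sum = 0 := by
    have : eval z (derivative p) = 0 := hz
    rw [heval2] at this
    rcases mul_eq_zero.mp this with h | h
    · exact absurd h hlc
    rcases mul_eq_zero.mp h with h | h
    · exact absurd h hQne
    exact h
  -- multiply by z and take real parts
  have hsum0' : (S.map fun r => z * (z - r)⁻¹).sum = 0 := by
    rw [Multiset.sum_map_mul_left, hsum0, mul_zero]
  have hre : ((S.map fun r => z * (z - r)⁻¹).map Complex.re).sum = 0 := by
    rw [← Complex.coe_reAddGroupHom, ← map_multiset_sum, hsum0',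
      Complex.coe_reAddGroupHom, Complex.zero_re]
  have hpos : 0 < ((S.map fun r => z * (z - r)⁻¹).map Complex.re).sum := by
    have hSne : S ≠ 0 := by
      intro h
      rw [h, Multiset.card_zero] at hcard
      omega
    rcases Multiset.exists_mem_of_ne_zero hSne with ⟨r, hr⟩
    have hkey : ∀ x ∈ (S.map fun r => z * (z - r)⁻¹).map Complex.re, 0 < x := by
      intro x hx
      rcases Multiset.mem_map.mp hx with ⟨w, hw, hwe⟩
      rcases Multiset.mem_map.mp hw with ⟨s, hs, hse⟩
      subst hwe; subst hse
      exact key_re_pos z s hlt (hroots s (hmemroot s hs)).1 (hzne s hs)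
    rcases Multiset.exists_cons_of_mem hr with ⟨t, ht⟩
    rw [ht, Multiset.map_cons, Multiset.map_cons, Multiset.sum_cons]
    have h1 : 0 < (z * (z - r)⁻¹).re :=
      key_re_pos z r hlt (hroots r (hmemroot r hr)).1 (hzne r hr)
    have h2 : 0 ≤ ((t.map fun r => z * (z - r)⁻¹).map Complex.re).sum := by
      apply Multiset.sum_nonneg
      intro x hx
      apply le_of_lt
      apply hkey
      rw [ht]
      simp only [Multiset.map_cons, Multiset.mem_cons]
      right; exact hx
    linarith
  rw [hre] at hpos
  exact lt_irrefl 0 hpos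
end
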